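/- Let Λ be a finite-dimensional algebra, M a module with Fac M a torsion class, and N a module with Sub N a torsion-free class. Set C = Fac M ∩ Sub N, and let 0 → U_M → M → P_M → 0 be the canonical short exact sequence for the torsion pair (⊥N, Sub N), so that P_M ∈ Sub N and U_M ∈ ⊥N. Then the smallest torsion class containing C equals the smallest torsion class containing P_M, i.e. T(C) = T(P_M). -/

import Mathlib

/- Common definitions: subcategories of the module category of a
finite-dimensional algebra, torsion theory, approximations,
(support τ-tilting)-style notions, etc. -/

universe u

variable (R : Type u) [Ring R]

/-- Closed under quotients (epimorphic images). -/
def QuotClosed (C : Set (ModuleCat.{u} R)) : Prop :=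
  ∀ (X Y : ModuleCat.{u} R) (f : X →ₗ[R] Y), Function.Surjective f → X ∈ C → Y ∈ C

/-- Closed under submodules. -/
def SubClosed (C : Set (ModuleCat.{u} R)) : Prop :=
  ∀ (X Y : ModuleCat.{u} R) (f : X →ₗ[R] Y), Function.Injective f → Y ∈ C → X ∈ C

/-- Closed under extensions: for a short exact sequence 0 → A → B → X → 0
with A, X ∈ C, also B ∈ C. -/
def ExtClosed (C : Set (ModuleCat.{u} R)) : Prop :=
  ∀ (A B X : ModuleCat.{u} R) (f : A →ₗ[R] B) (g : B →ₗ[R] X),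
    Function.Injective f → Function.Surjective g →
    LinearMap.range f = LinearMap.ker g → A ∈ C → X ∈ C → B ∈ C

/-- Closed under isomorphisms. -/
def IsoClosed (C : Set (ModuleCat.{u} R)) : Prop :=
  ∀ (X Y : ModuleCat.{u} R), (X ≃ₗ[R] Y) → X ∈ C → Y ∈ C

/-- Closed under images of morphisms between objects of C. -/
def ImageClosed (C : Set (ModuleCat.{u} R)) : Prop :=
  ∀ (X Y : ModuleCat.{u} R) (f : X →ₗ[R] Y), X ∈ C → Y ∈ C →
    ModuleCat.of R (LinearMap.range f) ∈ C

def IsTorsionClass (C : Set (ModuleCat.{u} R)) : Prop := QuotClosed R C ∧ ExtClosed R C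

def IsTorsionFreeClass (C : Set (ModuleCat.{u} R)) : Prop := SubClosed R C ∧ ExtClosed R C

/-- IE-closed: closed under (isomorphisms,) images and extensions. -/
def IsIEClosed (C : Set (ModuleCat.{u} R)) : Prop :=
  IsoClosed R C ∧ ImageClosed R C ∧ ExtClosed R C

/-- The smallest torsion class containing `C`. -/
def Tcl (C : Set (ModuleCat.{u} R)) : Set (ModuleCat.{u} R) :=
  ⋂₀ {T | IsTorsionClass R T ∧ C ⊆ T}

/-- The smallest torsion-free class containing `C`. -/
def Fcl (C : Set (ModuleCat.{u} R)) : Set (ModuleCat.{u} R) :=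
  ⋂₀ {F | IsTorsionFreeClass R F ∧ C ⊆ F}

/-- `Fac M`: quotients of finite direct sums of copies of `M`. -/
def FacSet (M : ModuleCat.{u} R) : Set (ModuleCat.{u} R) :=
  {X | ∃ (n : ℕ) (f : (Fin n → M) →ₗ[R] X), Function.Surjective f}

/-- `Sub N`: submodules of finite direct sums of copies of `N`. -/
def SubSet (N : ModuleCat.{u} R) : Set (ModuleCat.{u} R) :=
  {X | ∃ (n : ℕ) (f : X →ₗ[R] (Fin n → N)), Function.Injective f}

/-- Left perpendicular of a class: modules with no nonzero map to any member. -/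
def PerpL (S : Set (ModuleCat.{u} R)) : Set (ModuleCat.{u} R) :=
  {X | ∀ Y ∈ S, ∀ f : X →ₗ[R] Y, f = 0}

/-- `M^⊥`: modules receiving no nonzero map from `M`. -/
def PerpOfMod (M : ModuleCat.{u} R) : Set (ModuleCat.{u} R) :=
  {Y | ∀ f : M →ₗ[R] Y, f = 0}

/-- `g : F → M` is a right `C`-approximation of `M`. -/
def IsRightApprox (C : Set (ModuleCat.{u} R)) (F M : ModuleCat.{u} R) (g : F →ₗ[R] M) : Prop :=
  F ∈ C ∧ ∀ X ∈ C, ∀ a : X →ₗ[R] M, ∃ b : X →ₗ[R] F, g.comp b = a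

/-- `g : M → F` is a left `C`-approximation of `M`. -/
def IsLeftApprox (C : Set (ModuleCat.{u} R)) (M F : ModuleCat.{u} R) (g : M →ₗ[R] F) : Prop :=
  F ∈ C ∧ ∀ X ∈ C, ∀ a : M →ₗ[R] X, ∃ b : F →ₗ[R] X, b.comp g = a

def ContravariantlyFinite (C : Set (ModuleCat.{u} R)) : Prop :=
  ∀ M : ModuleCat.{u} R, ∃ (F : ModuleCat.{u} R) (g : F →ₗ[R] M), IsRightApprox R C F M g

def CovariantlyFinite (C : Set (ModuleCat.{u} R)) : Prop :=
  ∀ M : ModuleCat.{u} R, ∃ (F : ModuleCat.{u} R) (g : M →ₗ[R] F), IsLeftApprox R C M F g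

def FunctoriallyFinite (C : Set (ModuleCat.{u} R)) : Prop :=
  CovariantlyFinite R C ∧ ContravariantlyFinite R C

/-- `X` is a direct summand (retract) of `Y`. -/
def IsRetract (X Y : ModuleCat.{u} R) : Prop :=
  ∃ (i : X →ₗ[R] Y) (p : Y →ₗ[R] X), p.comp i = LinearMap.id

/-- `M` is basic (multiplicity-free): complementary summands share no nonzero
common direct summand. -/
def Basic (M : ModuleCat.{u} R) : Prop :=
  ∀ (A B : ModuleCat.{u} R), (M ≃ₗ[R] (A × B)) →
    ∀ X : ModuleCat.{u} R, IsRetract R X A → IsRetract R X B → Subsingleton X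

/-- `add` of a class: direct summands of finite direct sums of members. -/
def AddSet (S : Set (ModuleCat.{u} R)) : Set (ModuleCat.{u} R) :=
  {X | ∃ (n : ℕ) (f : Fin n → ModuleCat.{u} R), (∀ i, f i ∈ S) ∧
    IsRetract R X (ModuleCat.of R ((i : Fin n) → (f i)))}

/-- `P` is Ext-projective relative to `C`: every short exact sequence
`0 → K → E → P → 0` with `K ∈ C` splits (i.e. `Ext¹(P, C) = 0`). -/
def ExtProjIn (C : Set (ModuleCat.{u} R)) (P : ModuleCat.{u} R) : Prop :=
  ∀ (E : ModuleCat.{u} R) (g : E →ₗ[R] P), Function.Surjective g →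
    ModuleCat.of R (LinearMap.ker g) ∈ C → ∃ s : P →ₗ[R] E, g.comp s = LinearMap.id

/-- `I` is Ext-injective relative to `C`: every short exact sequence
`0 → I → E → Q → 0` with `Q ∈ C` splits (i.e. `Ext¹(C, I) = 0`). -/
def ExtInjIn (C : Set (ModuleCat.{u} R)) (I : ModuleCat.{u} R) : Prop :=
  ∀ (E : ModuleCat.{u} R) (f : I →ₗ[R] E), Function.Injective f →
    ModuleCat.of R (E ⧸ LinearMap.range f) ∈ C → ∃ r : E →ₗ[R] I, r.comp f = LinearMap.id

/-- Support τ-tilting module, via the Adachi–Iyama–Reiten characterization: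
`Fac M` is a functorially finite torsion class and `add M` consists exactly of
the Ext-projective objects of `Fac M`. -/
def IsSupportTauTilting (M : ModuleCat.{u} R) : Prop :=
  IsTorsionClass R (FacSet R M) ∧ FunctoriallyFinite R (FacSet R M) ∧
  ExtProjIn R (FacSet R M) M ∧
  ∀ P : ModuleCat.{u} R, P ∈ FacSet R M → ExtProjIn R (FacSet R M) P → P ∈ AddSet R {M}

/-- Support τ⁻-tilting module (dual characterization). -/
def IsSupportTauMinusTilting (N : ModuleCat.{u} R) : Prop :=
  IsTorsionFreeClass R (SubSet R N) ∧ FunctoriallyFinite R (SubSet R N) ∧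
  ExtInjIn R (SubSet R N) N ∧
  ∀ I : ModuleCat.{u} R, I ∈ SubSet R N → ExtInjIn R (SubSet R N) I → I ∈ AddSet R {N}

/-- Canonical twin support τ-tilting module. -/
def IsCanonicalPair (M N : ModuleCat.{u} R) : Prop :=
  IsSupportTauTilting R M ∧ Basic R M ∧ IsSupportTauMinusTilting R N ∧ Basic R N ∧
  FacSet R M = Tcl R (FacSet R M ∩ SubSet R N) ∧
  SubSet R N = Fcl R (FacSet R M ∩ SubSet R N)

/-- `Cok(C)`: cokernels of morphisms between objects of `C`. -/
def CokSet (C : Set (ModuleCat.{u} R)) : Set (ModuleCat.{u} R) :=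
  {Z | ∃ X ∈ C, ∃ Y ∈ C, ∃ (f : X →ₗ[R] Y) (g : Y →ₗ[R] Z),
    Function.Surjective g ∧ LinearMap.range f = LinearMap.ker g}

def IsICEClosed (C : Set (ModuleCat.{u} R)) : Prop :=
  IsIEClosed R C ∧ CokSet R C ⊆ C

/-- Support of a module with respect to a family of (indecomposable projective)
modules `P i`. -/
def SuppM {ι : Type u} (P : ι → ModuleCat.{u} R) (X : ModuleCat.{u} R) : Set ι :=
  {i | ∃ f : (P i) →ₗ[R] X, f ≠ 0}

/-- Support of a subcategory. -/
def SuppC {ι : Type u} (P : ι → ModuleCat.{u} R) (C : Set (ModuleCat.{u} R)) : Set ι :=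
  ⋃ X ∈ C, SuppM R P X

/-- Right perpendicular of a class: modules receiving no nonzero map from any member. -/
def PerpR (S : Set (ModuleCat.{u} R)) : Set (ModuleCat.{u} R) :=
  {Y | ∀ X ∈ S, ∀ f : X →ₗ[R] Y, f = 0}

/-- Torsion pair. -/
def IsTorsionPair (T F : Set (ModuleCat.{u} R)) : Prop :=
  IsTorsionClass R T ∧ IsTorsionFreeClass R F ∧ F = PerpR R T ∧ T = PerpL R F

section Aux

variable {R}

lemma isTorsionClass_tcl' (S : Set (ModuleCat.{u} R)) : IsTorsionClass R (Tcl R S) := by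
  constructor
  · intro X Y f hf hX T hT
    exact hT.1.1 X Y f hf (hX T hT)
  · intro A B X f g hf hg hex hA hX T hT
    exact hT.1.2 A B X f g hf hg hex (hA T hT) (hX T hT)

lemma subset_tcl' (S : Set (ModuleCat.{u} R)) : S ⊆ Tcl R S :=
  fun _ hX T hT => hT.2 hX

lemma tcl_le' {S T : Set (ModuleCat.{u} R)} (hT : IsTorsionClass R T) (h : S ⊆ T) :
    Tcl R S ⊆ T := fun X hX => hX T ⟨hT, h⟩

lemma pi_mem_of_torsion {T : Set (ModuleCat.{u} R)} (hT : IsTorsionClass R T)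
    {P : ModuleCat.{u} R} (hP : P ∈ T) (n : ℕ) :
    ModuleCat.of R (Fin n → P) ∈ T := by
  induction n with
  | zero =>
    exact hT.1 P (ModuleCat.of R (Fin 0 → P)) 0
      (fun y => ⟨0, funext fun j => j.elim0⟩) hP
  | succ n ih =>
    refine hT.2 P (ModuleCat.of R (Fin (n+1) → P)) (ModuleCat.of R (Fin n → P))
      (LinearMap.single R (fun _ : Fin (n+1) => (P : Type u)) 0)
      (LinearMap.funLeft R P Fin.succ) ?_ ?_ ?_ hP ih
    · intro a b hab
      simpa using congrFun hab 0
    · exact LinearMap.funLeft_surjective_of_injective R P _ (Fin.succ_injective n)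
    · ext v
      constructor
      · rintro ⟨a, rfl⟩
        funext j
        show (LinearMap.single R (fun _ : Fin (n+1) => (P : Type u)) 0 a) j.succ
          = (0 : Fin n → (P : Type u)) j
        rw [LinearMap.single_apply, Pi.single_eq_of_ne (Fin.succ_ne_zero j)]
        rfl
      · intro hv
        refine ⟨v 0, funext fun j => ?_⟩
        rcases Fin.eq_zero_or_eq_succ j with rfl | ⟨k, rfl⟩
        · show Pi.single (M := fun _ : Fin (n+1) => (P : Type u)) 0 (v 0) 0 = v 0
          rw [Pi.single_eq_same]
        · have : v k.succ = 0 := congrFun hv k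
          show Pi.single (M := fun _ : Fin (n+1) => (P : Type u)) 0 (v 0) k.succ = v k.succ
          rw [Pi.single_eq_of_ne (Fin.succ_ne_zero k), this]

lemma mem_of_facsub {M N UM PM : ModuleCat.{u} R}
    (i : UM →ₗ[R] M) (p : M →ₗ[R] PM) (hp : Function.Surjective p)
    (hex : LinearMap.range i = LinearMap.ker p)
    (hUM : UM ∈ PerpL R (SubSet R N))
    {T : Set (ModuleCat.{u} R)} (hT : IsTorsionClass R T) (hPT : PM ∈ T)
    {X : ModuleCat.{u} R} (hX : X ∈ FacSet R M ∩ SubSet R N) : X ∈ T := by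
  obtain ⟨⟨n, f, hf⟩, hXN⟩ := hX
  set q : (Fin n → M) →ₗ[R] (Fin n → PM) :=
    LinearMap.pi (fun j => p.comp (LinearMap.proj j)) with hqdef
  have hq : Function.Surjective q := by
    intro y
    choose v hv using fun j => hp (y j)
    exact ⟨v, funext hv⟩
  have hker : LinearMap.ker q ≤ LinearMap.ker f := by
    intro v hv
    have hvj : ∀ j, v j ∈ LinearMap.ker p := by
      intro j
      have := congrFun (LinearMap.mem_ker.mp hv) j
      simpa [hqdef] using this
    have hu : ∀ j, ∃ u : UM, i u = v j := by
      intro j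
      have : v j ∈ LinearMap.range i := hex ▸ hvj j
      exact this
    choose u hu using hu
    have hz : ∀ j : Fin n,
        f.comp ((LinearMap.single R (fun _ : Fin n => (M : Type u)) j).comp i) = 0 :=
      fun j => hUM X hXN _
    have : f v = 0 := by
      calc f v = f (∑ j, Pi.single j (v j)) := by rw [Finset.univ_sum_single]
        _ = ∑ j, f (Pi.single j (v j)) := map_sum f _ _
        _ = 0 := Finset.sum_eq_zero fun j _ => by
            rw [← hu j]
            simpa using LinearMap.congr_fun (hz j) (u j)
    exact this
  -- factor f through q
  let e := q.quotKerEquivOfSurjective hq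
  let h : (Fin n → PM) →ₗ[R] X :=
    (Submodule.liftQ (LinearMap.ker q) f hker).comp e.symm.toLinearMap
  have hsur : Function.Surjective h := by
    intro x
    obtain ⟨v, rfl⟩ := hf x
    refine ⟨q v, ?_⟩
    have he : e.symm (q v) = Submodule.Quotient.mk v := by
      rw [LinearEquiv.symm_apply_eq]
      rfl
    show (Submodule.liftQ (LinearMap.ker q) f hker) (e.symm (q v)) = f v
    rw [he, Submodule.liftQ_apply]
  exact hT.1 (ModuleCat.of R (Fin n → PM)) X h hsur (pi_mem_of_torsion hT hPT n)

end Aux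

/-- with `C = Fac M ∩ Sub N` and the canonical sequence
`0 → U_M → M → P_M → 0` for the torsion pair `(⊥N, Sub N)`, one has
`T(C) = T(P_M)`. -/

theorem stmt4 (k : Type u) [Field k] [Algebra k R] [FiniteDimensional k R]
    (M N UM PM : ModuleCat.{u} R)
    (hM : IsTorsionClass R (FacSet R M)) (hN : IsTorsionFreeClass R (SubSet R N))
    (i : UM →ₗ[R] M) (p : M →ₗ[R] PM)
    (hi : Function.Injective i) (hp : Function.Surjective p)
    (hex : LinearMap.range i = LinearMap.ker p)
    (hPM : PM ∈ SubSet R N) (hUM : UM ∈ PerpL R (SubSet R N)) :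
    Tcl R (FacSet R M ∩ SubSet R N) = Tcl R {PM} := by
  have hPMmem : PM ∈ FacSet R M ∩ SubSet R N := by
    refine ⟨⟨1, p.comp (LinearMap.proj 0), ?_⟩, hPM⟩
    intro x
    obtain ⟨m, hm⟩ := hp x
    exact ⟨fun _ => m, hm⟩
  apply Set.Subset.antisymm
  · refine tcl_le' (isTorsionClass_tcl' _) ?_
    intro X hX T hT
    exact mem_of_facsub i p hp hex hUM hT.1 (hT.2 rfl) hX
  · exact tcl_le' (isTorsionClass_tcl' _) (Set.singleton_subset_iff.mpr (subset_tcl' _ hPMmem))
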